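/- Let A = (a_1,…,a_{m1})^T ∈ {0,1}^{m1×n1} be the node-edge incidence matrix of a finite simple bipartite graph with vertex bipartition (R1, R2) of [m1], and let H = (h_1,…,h_{m2})^T ∈ {0,1}^{m2×n1} satisfy: (i) for every l ∈ [m2] there exists i ∈ [m1] with supp(h_l) ⊆ supp(a_i); (ii) for any two distinct rows h_i, h_l with supp(h_i) ∪ supp(h_l) ⊆ supp(a_k) for some k ∈ [m1], one has supp(h_i) ∩ supp(h_l) = ∅; and |supp(h_l)| ≥ 2 for all l ∈ [m2]. For L ⊆ [m2] and R ⊆ [m1] set L(R) := {l ∈ L : ∃ i ∈ R with supp(h_l) ⊆ supp(a_i)}. Then for all I ⊆ [m1] and L ⊆ [m2], the vector Σ_{i ∈ R1∩I} a_i + Σ_{l ∈ L(R1\I)} h_l has all entries in {0,1}, and likewise for R2 in place of R1. -/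

import Mathlib

open scoped Classical

/-- `L(R) = {l ∈ L : ∃ i ∈ R with supp(h_l) ⊆ supp(a_i)}`. -/
noncomputable def LofR {m1 m2 n1 : ℕ} (A : Matrix (Fin m1) (Fin n1) ℤ)
    (H : Matrix (Fin m2) (Fin n1) ℤ)
    (L : Finset (Fin m2)) (R : Finset (Fin m1)) : Finset (Fin m2) :=
  L.filter fun l => ∃ i ∈ R, {j | H l j ≠ 0} ⊆ {j | A i j ≠ 0}

lemma stmt11_key {m1 m2 n1 : ℕ}
    (A : Matrix (Fin m1) (Fin n1) ℤ) (H : Matrix (Fin m2) (Fin n1) ℤ)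
    (R : Finset (Fin m1))
    (hA01 : ∀ i e, A i e = 0 ∨ A i e = 1)
    (hH01 : ∀ l j, H l j = 0 ∨ H l j = 1)
    (hbip : ∀ e, ∃! i, i ∈ R ∧ A i e = 1)
    (hii : ∀ l l', l ≠ l' →
        (∃ i, {j | H l j ≠ 0} ∪ {j | H l' j ≠ 0} ⊆ {j | A i j ≠ 0}) →
        {j | H l j ≠ 0} ∩ {j | H l' j ≠ 0} = ∅)
    (I : Finset (Fin m1)) (L : Finset (Fin m2)) (j : Fin n1) :
    ((∑ i ∈ R ∩ I, A i j) + ∑ l ∈ LofR A H L (R \ I), H l j) ∈ ({0, 1} : Set ℤ) := by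
  obtain ⟨i0, ⟨hi0R, hi0j⟩, huniq⟩ := hbip j
  have hAsum : ∑ i ∈ R ∩ I, A i j = if i0 ∈ R ∩ I then 1 else 0 := by
    rw [show (∑ i ∈ R ∩ I, A i j) = ∑ i ∈ R ∩ I, if i = i0 then (1 : ℤ) else 0 from ?_,
      Finset.sum_ite_eq' (R ∩ I) i0 (fun _ => (1 : ℤ))]
    refine Finset.sum_congr rfl fun i hiRI => ?_
    by_cases h : i = i0
    · simp [h, hi0j]
    · simp only [if_neg h]
      rcases hA01 i j with h0 | h1
      · exact h0
      · exact absurd (huniq i ⟨(Finset.mem_inter.mp hiRI).1, h1⟩) h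
  set S := LofR A H L (R \ I) with hS
  have claim : ∀ l ∈ S, H l j ≠ 0 →
      i0 ∈ R \ I ∧ {j' | H l j' ≠ 0} ⊆ {j' | A i0 j' ≠ 0} := by
    intro l hlS hlj
    obtain ⟨-, i, hiRI, hsub⟩ := Finset.mem_filter.mp hlS
    have hAij : A i j ≠ 0 := hsub hlj
    have hAij1 : A i j = 1 := (hA01 i j).resolve_left hAij
    have : i = i0 := huniq i ⟨(Finset.mem_sdiff.mp hiRI).1, hAij1⟩
    exact ⟨this ▸ hiRI, this ▸ hsub⟩
  by_cases hex : ∃ l ∈ S, H l j ≠ 0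
  · obtain ⟨l0, hl0S, hl0j⟩ := hex
    obtain ⟨hi0RI, hsub0⟩ := claim l0 hl0S hl0j
    have hi0I : i0 ∉ I := (Finset.mem_sdiff.mp hi0RI).2
    have hA0 : ∑ i ∈ R ∩ I, A i j = 0 := by
      rw [hAsum, if_neg]
      simp [hi0I]
    have hH1 : ∑ l ∈ S, H l j = 1 := by
      rw [Finset.sum_eq_single_of_mem l0 hl0S]
      · exact (hH01 l0 j).resolve_left hl0j
      · intro l hlS hne
        by_contra hlj
        obtain ⟨-, hsub⟩ := claim l hlS hlj
        have hempty := hii l l0 hne ⟨i0, Set.union_subset hsub hsub0⟩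
        have : j ∈ {j' | H l j' ≠ 0} ∩ {j' | H l0 j' ≠ 0} := ⟨hlj, hl0j⟩
        rw [hempty] at this
        exact this
    rw [hA0, hH1]
    simp
  · push_neg at hex
    have hH0 : ∑ l ∈ S, H l j = 0 := Finset.sum_eq_zero fun l hlS => hex l hlS
    rw [hH0, add_zero, hAsum]
    split <;> simp

/-- with `A` the node-edge incidence matrix of a finite simple bipartite graph
with bipartition `(R1, R2)` and `H` satisfying (i), (ii) and `|supp(h_l)| ≥ 2`, for all
`I ⊆ [m1]` and `L ⊆ [m2]` the vector `Σ_{i ∈ R1∩I} a_i + Σ_{l ∈ L(R1\I)} h_l` has all entries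
in `{0,1}`, and likewise with `R2` in place of `R1`. -/
theorem stmt11 (m1 m2 n1 : ℕ)
    (A : Matrix (Fin m1) (Fin n1) ℤ) (H : Matrix (Fin m2) (Fin n1) ℤ)
    (R1 R2 : Finset (Fin m1))
    (hdisj : Disjoint R1 R2) (hcover : R1 ∪ R2 = Finset.univ)
    (hA01 : ∀ i e, A i e = 0 ∨ A i e = 1)
    (hH01 : ∀ l j, H l j = 0 ∨ H l j = 1)
    (hbip1 : ∀ e, ∃! i, i ∈ R1 ∧ A i e = 1)
    (hbip2 : ∀ e, ∃! i, i ∈ R2 ∧ A i e = 1)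
    (hsimple : ∀ e e' : Fin n1, (∀ i, A i e = A i e') → e = e')
    (hi : ∀ l, ∃ i, {j | H l j ≠ 0} ⊆ {j | A i j ≠ 0})
    (hii : ∀ l l', l ≠ l' →
        (∃ i, {j | H l j ≠ 0} ∪ {j | H l' j ≠ 0} ⊆ {j | A i j ≠ 0}) →
        {j | H l j ≠ 0} ∩ {j | H l' j ≠ 0} = ∅)
    (hsupp2 : ∀ l, 2 ≤ {j | H l j ≠ 0}.ncard)
    (I : Finset (Fin m1)) (L : Finset (Fin m2)) :
    ∀ j : Fin n1,
      ((∑ i ∈ R1 ∩ I, A i j) + ∑ l ∈ LofR A H L (R1 \ I), H l j) ∈ ({0, 1} : Set ℤ) ∧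
      ((∑ i ∈ R2 ∩ I, A i j) + ∑ l ∈ LofR A H L (R2 \ I), H l j) ∈ ({0, 1} : Set ℤ) := by
  intro j
  exact ⟨stmt11_key A H R1 hA01 hH01 hbip1 hii I L j,
    stmt11_key A H R2 hA01 hH01 hbip2 hii I L j⟩
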